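/- Let A > 0 and let g : [0,∞) → ℝ be continuous, bounded and (Lebesgue) integrable. Then lim_{γ → +∞} ∫_0^γ ( ∫_0^∞ g(s)·( e^{−A²(s−r)²} − e^{−A²(s+r)²} ) ds ) dr = ∫_0^∞ g(s)·( ∫_{−s}^{s} e^{−A²v²} dv ) ds. -/

import Mathlib

open Real MeasureTheory intervalIntegral Filter Topology

/-- Lemma 3.7 of the paper: the double integral over the boundary
layer of the odd-reflection kernel applied to g converges, as the layer width γ
tends to infinity, to the stated iterated integral. -/
theorem double_integral_limit
    (A : ℝ) (hA : 0 < A)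
    (g : ℝ → ℝ)
    (hgcont : ContinuousOn g (Set.Ici 0))
    (hgbdd : ∃ C, ∀ s ≥ (0 : ℝ), |g s| ≤ C)
    (hgint : IntegrableOn g (Set.Ici 0)) :
    Tendsto (fun γ : ℝ =>
      ∫ r in (0 : ℝ)..γ,
        ∫ s in Set.Ioi (0 : ℝ), g s *
          (Real.exp (-(A ^ 2 * (s - r) ^ 2)) - Real.exp (-(A ^ 2 * (s + r) ^ 2))))
      atTop
      (nhds (∫ s in Set.Ioi (0 : ℝ), g s * ∫ v in (-s)..s, Real.exp (-(A ^ 2 * v ^ 2)))) := by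
  set f : ℝ → ℝ := fun v => Real.exp (-(A ^ 2 * v ^ 2)) with hf_def
  have hfc : Continuous f := by fun_prop
  have hfpos : ∀ v, 0 < f v := fun v => Real.exp_pos _
  have hfi : Integrable f := by
    have h := integrable_exp_neg_mul_sq (show (0:ℝ) < A ^ 2 by positivity)
    simpa [hf_def, neg_mul] using h
  set I : ℝ := ∫ v, f v with hI_def
  -- measurability of g on Ioi 0
  have hgIoi : IntegrableOn g (Set.Ioi 0) := hgint.mono_set Set.Ioi_subset_Ici_self
  have hgm : AEStronglyMeasurable g (volume.restrict (Set.Ioi (0:ℝ))) := hgIoi.1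
  -- Step A: inner integral rewrite
  have stepA : ∀ (γ s : ℝ),
      (∫ r in (0:ℝ)..γ, (f (s - r) - f (s + r)))
        = (∫ v in (s - γ)..s, f v) - ∫ v in s..(s + γ), f v := by
    intro γ s
    have h1 : IntervalIntegrable (fun r => f (s - r)) volume 0 γ :=
      (hfc.comp (continuous_const.sub continuous_id)).intervalIntegrable _ _
    have h2 : IntervalIntegrable (fun r => f (s + r)) volume 0 γ :=
      (hfc.comp (continuous_const.add continuous_id)).intervalIntegrable _ _
    rw [intervalIntegral.integral_sub h1 h2]
    have e1 : (∫ r in (0:ℝ)..γ, f (s - r)) = ∫ v in (s - γ)..s, f v := by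
      simpa using intervalIntegral.integral_comp_sub_left (a := (0:ℝ)) (b := γ) f s
    have e2 : (∫ r in (0:ℝ)..γ, f (s + r)) = ∫ v in s..(s + γ), f v := by
      simpa using intervalIntegral.integral_comp_add_left (a := (0:ℝ)) (b := γ) f s
    rw [e1, e2]
  -- the limit identity for the inner kernel
  have keylim : ∀ s : ℝ,
      Tendsto (fun γ : ℝ => (∫ v in (s - γ)..s, f v) - ∫ v in s..(s + γ), f v)
        atTop (nhds (∫ v in (-s)..s, f v)) := by
    intro s
    have t1 : Tendsto (fun γ : ℝ => ∫ v in (s - γ)..s, f v) atTop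
        (nhds (∫ v in Set.Iic s, f v)) := by
      apply intervalIntegral_tendsto_integral_Iic s hfi.integrableOn
      exact tendsto_atBot_add_const_left _ s tendsto_neg_atTop_atBot |>.congr (by
        intro x; ring_nf)
    have t2 : Tendsto (fun γ : ℝ => ∫ v in s..(s + γ), f v) atTop
        (nhds (∫ v in Set.Ioi s, f v)) := by
      apply intervalIntegral_tendsto_integral_Ioi s hfi.integrableOn
      exact tendsto_atTop_add_const_left _ s tendsto_id
    have heq : (∫ v in Set.Iic s, f v) - (∫ v in Set.Ioi s, f v)
        = ∫ v in (-s)..s, f v := by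
      have hIoi : (∫ v in Set.Ioi s, f v) = ∫ v in Set.Iic (-s), f v := by
        rw [← integral_comp_neg_Ioi]
        congr 1
        ext v
        simp [hf_def, neg_sq]
      rw [hIoi]
      exact intervalIntegral.integral_Iic_sub_Iic hfi.integrableOn hfi.integrableOn
    rw [← heq]
    exact t1.sub t2
  -- bounds on the inner kernel
  have keybdd : ∀ s : ℝ, ∀ γ ≥ (0:ℝ),
      |(∫ v in (s - γ)..s, f v) - ∫ v in s..(s + γ), f v| ≤ I := by
    intro s γ hγ
    have hb1 : (0:ℝ) ≤ ∫ v in (s - γ)..s, f v :=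
      intervalIntegral.integral_nonneg (by linarith) (fun v _ => (hfpos v).le)
    have hb2 : (0:ℝ) ≤ ∫ v in s..(s + γ), f v :=
      intervalIntegral.integral_nonneg (by linarith) (fun v _ => (hfpos v).le)
    have hub1 : (∫ v in (s - γ)..s, f v) ≤ I := by
      rw [intervalIntegral.integral_of_le (by linarith)]
      exact setIntegral_le_integral hfi (Filter.Eventually.of_forall fun v => (hfpos v).le)
    have hub2 : (∫ v in s..(s + γ), f v) ≤ I := by
      rw [intervalIntegral.integral_of_le (by linarith)]
      exact setIntegral_le_integral hfi (Filter.Eventually.of_forall fun v => (hfpos v).le)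
    rw [abs_le]
    constructor <;> linarith
  -- Step B : Fubini for γ ≥ 0
  have stepB : ∀ γ ≥ (0:ℝ),
      (∫ r in (0:ℝ)..γ, ∫ s in Set.Ioi (0:ℝ), g s * (f (s - r) - f (s + r)))
        = ∫ s in Set.Ioi (0:ℝ),
            g s * ((∫ v in (s - γ)..s, f v) - ∫ v in s..(s + γ), f v) := by
    intro γ hγ
    have hμ : IsFiniteMeasure (volume.restrict (Set.Ioc (0:ℝ) γ)) := by
      constructor
      rw [Measure.restrict_apply_univ]
      exact measure_Ioc_lt_top
    have hint : Integrable (Function.uncurry fun r s => g s * (f (s - r) - f (s + r)))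
        ((volume.restrict (Set.Ioc (0:ℝ) γ)).prod (volume.restrict (Set.Ioi (0:ℝ)))) := by
      have hker : Continuous fun p : ℝ × ℝ => f (p.2 - p.1) - f (p.2 + p.1) := by fun_prop
      have hmeas : AEStronglyMeasurable
          (Function.uncurry fun r s => g s * (f (s - r) - f (s + r)))
          ((volume.restrict (Set.Ioc (0:ℝ) γ)).prod (volume.restrict (Set.Ioi (0:ℝ)))) := by
        exact (hgm.comp_snd.mul hker.aestronglyMeasurable)
      have hbd : Integrable (fun p : ℝ × ℝ => (1:ℝ) * |g p.2|)
          ((volume.restrict (Set.Ioc (0:ℝ) γ)).prod (volume.restrict (Set.Ioi (0:ℝ)))) :=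
        Integrable.mul_prod (integrable_const 1) hgIoi.abs
      refine Integrable.mono' hbd hmeas (Filter.Eventually.of_forall ?_)
      rintro ⟨r, s⟩
      simp only [Function.uncurry, norm_mul, Real.norm_eq_abs, one_mul]
      have h1 : |f (s - r) - f (s + r)| ≤ 1 := by
        have e1 : f (s - r) ≤ 1 := Real.exp_le_one_iff.mpr (neg_nonpos.mpr (by positivity))
        have e2 : f (s + r) ≤ 1 := Real.exp_le_one_iff.mpr (neg_nonpos.mpr (by positivity))
        have e3 := (hfpos (s - r)).le
        have e4 := (hfpos (s + r)).le
        rw [abs_le]; constructor <;> linarith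
      calc |g s| * |f (s - r) - f (s + r)| ≤ |g s| * 1 :=
            mul_le_mul_of_nonneg_left h1 (abs_nonneg _)
        _ = |g s| := mul_one _
    rw [intervalIntegral.integral_of_le hγ]
    have hswap := MeasureTheory.integral_integral_swap hint
    rw [hswap]
    apply setIntegral_congr_fun measurableSet_Ioi
    intro s _
    dsimp only
    have : (∫ r in Set.Ioc (0:ℝ) γ, g s * (f (s - r) - f (s + r)))
        = ∫ r in (0:ℝ)..γ, g s * (f (s - r) - f (s + r)) := by
      rw [intervalIntegral.integral_of_le hγ]
    rw [this, intervalIntegral.integral_const_mul, stepA γ s]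
  -- Step C : dominated convergence
  have stepC : Tendsto (fun γ : ℝ => ∫ s in Set.Ioi (0:ℝ),
        g s * ((∫ v in (s - γ)..s, f v) - ∫ v in s..(s + γ), f v)) atTop
      (nhds (∫ s in Set.Ioi (0:ℝ), g s * ∫ v in (-s)..s, f v)) := by
    apply MeasureTheory.tendsto_integral_filter_of_dominated_convergence (fun s => |g s| * I)
    · filter_upwards [eventually_ge_atTop (0:ℝ)] with γ hγ
      have hcont : Continuous fun s : ℝ =>
          (∫ v in (s - γ)..s, f v) - ∫ v in s..(s + γ), f v := by
        have hprim : Continuous fun x : ℝ => ∫ v in (0:ℝ)..x, f v :=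
          intervalIntegral.continuous_primitive
            (fun a b => hfc.intervalIntegrable a b) 0
        have hrep : ∀ a b : ℝ, (∫ v in a..b, f v)
            = (∫ v in (0:ℝ)..b, f v) - ∫ v in (0:ℝ)..a, f v := by
          intro a b
          rw [intervalIntegral.integral_interval_sub_left
            (hfc.intervalIntegrable 0 b) (hfc.intervalIntegrable 0 a)]
        have : (fun s : ℝ => (∫ v in (s - γ)..s, f v) - ∫ v in s..(s + γ), f v)
            = fun s => ((∫ v in (0:ℝ)..s, f v) - ∫ v in (0:ℝ)..(s - γ), f v)
              - ((∫ v in (0:ℝ)..(s + γ), f v) - ∫ v in (0:ℝ)..s, f v) := by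
          funext s; rw [hrep (s - γ) s, hrep s (s + γ)]
        rw [this]
        fun_prop
      exact (hgm.mul hcont.aestronglyMeasurable)
    · filter_upwards [eventually_ge_atTop (0:ℝ)] with γ hγ
      refine Filter.Eventually.of_forall fun s => ?_
      rw [norm_mul, Real.norm_eq_abs, Real.norm_eq_abs]
      exact mul_le_mul_of_nonneg_left (keybdd s γ hγ) (abs_nonneg _)
    · exact hgIoi.abs.mul_const I
    · exact Filter.Eventually.of_forall fun s => (keylim s).const_mul (g s)
  -- combine
  refine stepC.congr' ?_
  filter_upwards [eventually_ge_atTop (0:ℝ)] with γ hγ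
  exact (stepB γ hγ).symm
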